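/- Nabla-monotone l'Hôpital rule on the q-scale (left endpoint): fix q ∈ (0,1), let a = q^m and b = q^n be points of the q-scale with a < b (m, n ∈ ℤ), and let f, g : (0,∞) → ℝ. Suppose that either D_q g(x) > 0 for every point x of the q-scale with a < x ≤ b, or D_q g(x) < 0 for every such x. If the function x ↦ D_q f(x)/D_q g(x) is strictly increasing on the set {x ∈ q^ℤ : a < x ≤ b}, then the function x ↦ (f(x) − f(a))/(g(x) − g(a)) is strictly increasing on the set {x ∈ q^ℤ : a < x ≤ b}. (Note g(x) ≠ g(a) for such x, since g is strictly monotone along the q-scale points of [a,b].) -/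

import Mathlib

/-- The `q`-derivative of `f` at `x ≠ 0`: `D_q f x = (f (q x) - f x) / ((q - 1) x)`. -/
noncomputable def qDeriv (q : ℝ) (f : ℝ → ℝ) (x : ℝ) : ℝ :=
  (f (q * x) - f x) / ((q - 1) * x)

private lemma qh_sum_succ_top (a b : ℤ) (h : a ≤ b) (F : ℤ → ℝ) :
    ∑ j ∈ Finset.Ico a (b+1), F j = (∑ j ∈ Finset.Ico a b, F j) + F b := by
  rw [← Finset.Ico_union_Ico_eq_Ico h (by omega : b ≤ b+1),
    Finset.sum_union (Finset.Ico_disjoint_Ico_consecutive a b (b+1))]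
  congr 1
  have : Finset.Ico b (b+1) = {b} := by ext x; simp [Finset.mem_Ico]; omega
  rw [this, Finset.sum_singleton]

private lemma qh_telescope_nat (F : ℤ → ℝ) (k : ℤ) (N : ℕ) :
    F k - F (k + (N : ℤ)) = ∑ j ∈ Finset.Ico k (k + (N : ℤ)), (F j - F (j+1)) := by
  induction N with
  | zero => simp
  | succ N ih =>
    have hcast : k + ((N + 1 : ℕ) : ℤ) = (k + (N : ℤ)) + 1 := by push_cast; ring
    rw [hcast, qh_sum_succ_top k (k + (N : ℤ)) (by omega) (fun j => F j - F (j+1)), ← ih]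
    ring

private lemma qh_telescope (F : ℤ → ℝ) (k : ℤ) :
    ∀ M, k ≤ M → F k - F M = ∑ j ∈ Finset.Ico k M, (F j - F (j+1)) := by
  intro M hM
  obtain ⟨N, rfl⟩ : ∃ N : ℕ, M = k + (N : ℤ) := ⟨(M - k).toNat, by omega⟩
  exact qh_telescope_nat F k N

private lemma qh_mediant (d r : ℤ → ℝ) (l k M : ℤ) (hlk : l < k) (hkM : k < M)
    (hd : ∀ j ∈ Finset.Ico l M, 0 < d j)
    (hr : ∀ j1 ∈ Finset.Ico l M, ∀ j2 ∈ Finset.Ico l M, j1 < j2 → r j2 < r j1) :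
    (∑ j ∈ Finset.Ico k M, d j * r j) / (∑ j ∈ Finset.Ico k M, d j) <
    (∑ j ∈ Finset.Ico l M, d j * r j) / (∑ j ∈ Finset.Ico l M, d j) := by
  have hlk' : l ≤ k := hlk.le
  have hkM' : k ≤ M := hkM.le
  have hsplit : ∀ F : ℤ → ℝ, ∑ j ∈ Finset.Ico l M, F j =
      (∑ j ∈ Finset.Ico l k, F j) + ∑ j ∈ Finset.Ico k M, F j := fun F => by
    rw [← Finset.Ico_union_Ico_eq_Ico hlk' hkM',
      Finset.sum_union (Finset.Ico_disjoint_Ico_consecutive l k M)]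
  set A := ∑ j ∈ Finset.Ico l k, d j * r j with hA
  set P := ∑ j ∈ Finset.Ico l k, d j with hP'
  set B := ∑ j ∈ Finset.Ico k M, d j * r j with hB
  set Q := ∑ j ∈ Finset.Ico k M, d j with hQ'
  have hsub1 : Finset.Ico k M ⊆ Finset.Ico l M := by
    intro j hj; simp only [Finset.mem_Ico] at *; omega
  have hsub2 : Finset.Ico l k ⊆ Finset.Ico l M := by
    intro j hj; simp only [Finset.mem_Ico] at *; omega
  have hQ : 0 < Q :=
    Finset.sum_pos (fun j hj => hd j (hsub1 hj)) ⟨k, Finset.mem_Ico.mpr ⟨le_rfl, hkM⟩⟩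
  have hP : 0 < P :=
    Finset.sum_pos (fun j hj => hd j (hsub2 hj)) ⟨l, Finset.mem_Ico.mpr ⟨le_rfl, hlk⟩⟩
  have hkmem : k ∈ Finset.Ico l M := Finset.mem_Ico.mpr ⟨hlk', hkM⟩
  have hk1mem : k - 1 ∈ Finset.Ico l M := Finset.mem_Ico.mpr ⟨by omega, by omega⟩
  have h1 : B ≤ r k * Q := by
    have : B ≤ ∑ j ∈ Finset.Ico k M, d j * r k := by
      apply Finset.sum_le_sum
      intro j hj
      have hkj : k ≤ j := (Finset.mem_Ico.mp hj).1
      have hrj : r j ≤ r k := by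
        rcases eq_or_lt_of_le hkj with h | h
        · rw [← h]
        · exact (hr k hkmem j (hsub1 hj) h).le
      exact mul_le_mul_of_nonneg_left hrj (hd j (hsub1 hj)).le
    calc B ≤ ∑ j ∈ Finset.Ico k M, d j * r k := this
    _ = r k * Q := by rw [← Finset.sum_mul]; ring
  have h2 : r (k-1) * P ≤ A := by
    have : ∑ j ∈ Finset.Ico l k, d j * r (k-1) ≤ A := by
      apply Finset.sum_le_sum
      intro j hj
      have hjk : j < k := (Finset.mem_Ico.mp hj).2
      have hrj : r (k-1) ≤ r j := by
        rcases eq_or_lt_of_le (by omega : j ≤ k - 1) with h | h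
        · rw [h]
        · exact (hr j (hsub2 hj) (k-1) hk1mem h).le
      exact mul_le_mul_of_nonneg_left hrj (hd j (hsub2 hj)).le
    calc r (k-1) * P = ∑ j ∈ Finset.Ico l k, d j * r (k-1) := by
          rw [← Finset.sum_mul]; ring
    _ ≤ A := this
  have h3 : r k < r (k-1) := hr (k-1) hk1mem k hkmem (by omega)
  rw [hsplit (fun j => d j * r j), hsplit d, div_lt_div_iff₀ hQ (by linarith)]
  nlinarith [mul_pos hP hQ, mul_le_mul_of_nonneg_right h1 hP.le,
    mul_le_mul_of_nonneg_right h2 hQ.le]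

/-- Nabla-monotone l'Hôpital rule on the q-scale (left endpoint):
if `D_q g` has constant sign on the q-scale points of `(a, b]` and
`D_q f / D_q g` is strictly increasing there, then
`x ↦ (f x - f a) / (g x - g a)` is strictly increasing on the same set. -/
theorem qscale_lhopital_left_increasing
    (q : ℝ) (hq0 : 0 < q) (hq1 : q < 1) (m n : ℤ) (a b : ℝ)
    (ha : a = q ^ m) (hb : b = q ^ n) (hab : a < b) (f g : ℝ → ℝ)
    (S : Set ℝ) (hS : S = {x : ℝ | (∃ k : ℤ, x = q ^ k) ∧ a < x ∧ x ≤ b})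
    (hg : (∀ x ∈ S, 0 < qDeriv q g x) ∨ (∀ x ∈ S, qDeriv q g x < 0))
    (hmono : StrictMonoOn (fun x => qDeriv q f x / qDeriv q g x) S) :
    StrictMonoOn (fun x => (f x - f a) / (g x - g a)) S := by
  subst hS ha hb
  have hqne : q ≠ 0 := hq0.ne'
  have hzlt : ∀ i j : ℤ, (q : ℝ) ^ i < q ^ j ↔ j < i :=
    fun i j => zpow_lt_zpow_iff_right_of_lt_one₀ hq0 hq1
  have hzle : ∀ i j : ℤ, (q : ℝ) ^ i ≤ q ^ j ↔ j ≤ i :=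
    fun i j => zpow_le_zpow_iff_right_of_lt_one₀ hq0 hq1
  have hmemS : ∀ j : ℤ, n ≤ j → j < m →
      (q ^ j : ℝ) ∈ {x : ℝ | (∃ k : ℤ, x = q ^ k) ∧ q ^ m < x ∧ x ≤ q ^ n} := by
    intro j h1 h2
    exact ⟨⟨j, rfl⟩, (hzlt m j).mpr h2, (hzle j n).mpr h1⟩
  -- telescoping representation
  have hterm : ∀ h : ℝ → ℝ, ∀ j : ℤ,
      (1 - q) * q ^ j * qDeriv q h (q ^ j) = h (q ^ j) - h (q ^ (j+1)) := by
    intro h j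
    have hqj : (q : ℝ) ^ j ≠ 0 := (zpow_pos hq0 j).ne'
    have hq1' : q - 1 ≠ 0 := by linarith
    have hmul : q * q ^ j = q ^ (j+1) := by rw [zpow_add_one₀ hqne]; ring
    simp only [qDeriv, hmul]
    field_simp
    ring
  have key : ∀ h : ℝ → ℝ, ∀ k : ℤ, k ≤ m →
      h (q ^ k) - h (q ^ m) =
        ∑ j ∈ Finset.Ico k m, (1 - q) * q ^ j * qDeriv q h (q ^ j) := by
    intro h k hk
    rw [qh_telescope (fun j => h (q ^ j)) k m hk]
    exact Finset.sum_congr rfl fun j _ => (hterm h j).symm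
  intro x hx y hy hxy
  obtain ⟨⟨k, rfl⟩, hax, hxb⟩ := hx
  obtain ⟨⟨l, rfl⟩, hay, hyb⟩ := hy
  have hkm : k < m := (hzlt m k).mp hax
  have hnk : n ≤ k := (hzle k n).mp hxb
  have hlm : l < m := (hzlt m l).mp hay
  have hnl : n ≤ l := (hzle l n).mp hyb
  have hlk : l < k := (hzlt k l).mp hxy
  have hDg : ∀ j : ℤ, n ≤ j → j < m → qDeriv q g (q ^ j) ≠ 0 := by
    intro j h1 h2
    rcases hg with hg | hg
    · exact (hg _ (hmemS j h1 h2)).ne'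
    · exact (hg _ (hmemS j h1 h2)).ne
  set r : ℤ → ℝ := fun j => qDeriv q f (q ^ j) / qDeriv q g (q ^ j) with hr'
  have hrmono : ∀ j1 ∈ Finset.Ico l m, ∀ j2 ∈ Finset.Ico l m, j1 < j2 → r j2 < r j1 := by
    intro j1 hj1 j2 hj2 h12
    simp only [Finset.mem_Ico] at hj1 hj2
    exact hmono (hmemS j2 (by omega) hj2.2) (hmemS j1 (by omega) hj1.2)
      ((hzlt j2 j1).mpr h12)
  have hcpos : ∀ j : ℤ, 0 < (1 - q) * q ^ j :=
    fun j => mul_pos (by linarith) (zpow_pos hq0 j)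
  rcases hg with hgp | hgn
  · set d : ℤ → ℝ := fun j => (1 - q) * q ^ j * qDeriv q g (q ^ j) with hd'
    have hd : ∀ j ∈ Finset.Ico l m, 0 < d j := by
      intro j hj
      simp only [Finset.mem_Ico] at hj
      exact mul_pos (hcpos j) (hgp _ (hmemS j (by omega) hj.2))
    have hnum : ∀ k' : ℤ, n ≤ k' → k' < m →
        f (q ^ k') - f (q ^ m) = ∑ j ∈ Finset.Ico k' m, d j * r j := by
      intro k' h1 h2
      rw [key f k' h2.le]
      refine Finset.sum_congr rfl fun j hj => ?_
      simp only [Finset.mem_Ico] at hj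
      have := hDg j (by omega) hj.2
      simp only [hd', hr']
      field_simp
    have hden : ∀ k' : ℤ, n ≤ k' → k' < m →
        g (q ^ k') - g (q ^ m) = ∑ j ∈ Finset.Ico k' m, d j := by
      intro k' h1 h2
      rw [key g k' h2.le]
    simp only
    rw [hnum k hnk hkm, hden k hnk hkm, hnum l hnl hlm, hden l hnl hlm]
    exact qh_mediant d r l k m hlk hkm hd hrmono
  · set d : ℤ → ℝ := fun j => -((1 - q) * q ^ j * qDeriv q g (q ^ j)) with hd'
    have hd : ∀ j ∈ Finset.Ico l m, 0 < d j := by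
      intro j hj
      simp only [Finset.mem_Ico] at hj
      have := hgn _ (hmemS j (by omega) hj.2)
      have := hcpos j
      simp only [hd']
      nlinarith
    have hnum : ∀ k' : ℤ, n ≤ k' → k' < m →
        f (q ^ k') - f (q ^ m) = -∑ j ∈ Finset.Ico k' m, d j * r j := by
      intro k' h1 h2
      rw [key f k' h2.le, ← Finset.sum_neg_distrib]
      refine Finset.sum_congr rfl fun j hj => ?_
      simp only [Finset.mem_Ico] at hj
      have := hDg j (by omega) hj.2
      simp only [hd', hr']
      field_simp
    have hden : ∀ k' : ℤ, n ≤ k' → k' < m →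
        g (q ^ k') - g (q ^ m) = -∑ j ∈ Finset.Ico k' m, d j := by
      intro k' h1 h2
      rw [key g k' h2.le, ← Finset.sum_neg_distrib]
      exact Finset.sum_congr rfl fun j _ => by simp [hd']
    simp only
    rw [hnum k hnk hkm, hden k hnk hkm, hnum l hnl hlm, hden l hnl hlm,
      neg_div_neg_eq, neg_div_neg_eq]
    exact qh_mediant d r l k m hlk hkm hd hrmono
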